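/- If G is a connected finite simple graph whose valency (degree) partition into exactly two classes is equitable, then G has exactly two main eigenvalues. -/

import Mathlib

open Matrix

def SimpleGraph.IsMainEigenvalue {V : Type*} [Fintype V] [DecidableEq V]
    (G : SimpleGraph V) [DecidableRel G.Adj] (μ : ℝ) : Prop :=
  ∃ x : V → ℝ, x ≠ 0 ∧ (G.adjMatrix ℝ).mulVec x = μ • x ∧ x ⬝ᵥ (fun _ => (1 : ℝ)) ≠ 0

private lemma walk_edge_aux {V : Type*} [Fintype V] (G : SimpleGraph V) [DecidableRel G.Adj]
    (k₁ k₂ : ℕ) (hk : k₁ ≠ k₂) (hdeg : ∀ v : V, G.degree v = k₁ ∨ G.degree v = k₂) :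
    ∀ {u v : V}, G.Walk u v → G.degree u = k₁ → G.degree v = k₂ →
      ∃ a b : V, G.Adj a b ∧ G.degree a = k₁ ∧ G.degree b = k₂ := by
  intro u v p
  induction p with
  | nil => intro h1 h2; exact absurd (h1.symm.trans h2) hk
  | @cons u w v h p ih =>
    intro h1 h2
    rcases hdeg w with hw | hw
    · exact ih hw h2
    · exact ⟨u, w, h, h1, hw⟩

theorem stmt_5 {V : Type*} [Fintype V] [DecidableEq V]
    (G : SimpleGraph V) [DecidableRel G.Adj] (hG : G.Connected)
    (k₁ k₂ : ℕ) (hk : k₁ ≠ k₂)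
    (hdeg : ∀ v : V, G.degree v = k₁ ∨ G.degree v = k₂)
    (h₁ : ∃ v : V, G.degree v = k₁) (h₂ : ∃ v : V, G.degree v = k₂)
    -- the valency partition is equitable:
    (b₁₁ b₁₂ b₂₁ b₂₂ : ℕ)
    (heq₁ : ∀ v : V, G.degree v = k₁ →
      ((G.neighborFinset v).filter (fun w => G.degree w = k₁)).card = b₁₁ ∧
      ((G.neighborFinset v).filter (fun w => G.degree w = k₂)).card = b₁₂)
    (heq₂ : ∀ v : V, G.degree v = k₂ →
      ((G.neighborFinset v).filter (fun w => G.degree w = k₁)).card = b₂₁ ∧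
      ((G.neighborFinset v).filter (fun w => G.degree w = k₂)).card = b₂₂) :
    {μ : ℝ | G.IsMainEigenvalue μ}.ncard = 2 := by
  classical
  obtain ⟨v₁, hv₁⟩ := h₁
  obtain ⟨v₂, hv₂⟩ := h₂
  -- an edge between the two classes
  obtain ⟨a, b, hab, ha, hb⟩ :=
    walk_edge_aux G k₁ k₂ hk hdeg ((hG.preconnected v₁ v₂).some) hv₁ hv₂
  -- not-k₁ means k₂
  have hiff : ∀ w : V, (¬ G.degree w = k₁) ↔ G.degree w = k₂ := by
    intro w
    rcases hdeg w with h | h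
    · simp [h, hk]
    · simpa [h] using (Ne.symm hk)
  have hb12 : 0 < b₁₂ := by
    have := (heq₁ a ha).2
    rw [← this]
    apply Finset.card_pos.mpr
    exact ⟨b, by simp [hab, hb]⟩
  have hb21 : 0 < b₂₁ := by
    have := (heq₂ b hb).1
    rw [← this]
    apply Finset.card_pos.mpr
    exact ⟨a, by simp [hab.symm, ha]⟩
  -- degrees are row sums of the quotient matrix
  have hsplit : ∀ v : V, ((G.neighborFinset v).filter (fun w => G.degree w = k₁)).card
      + ((G.neighborFinset v).filter (fun w => G.degree w = k₂)).card = G.degree v := by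
    intro v
    rw [← SimpleGraph.card_neighborFinset_eq_degree]
    rw [show ((G.neighborFinset v).filter (fun w => G.degree w = k₂))
        = ((G.neighborFinset v).filter (fun w => ¬ G.degree w = k₁)) from
      Finset.filter_congr (fun w _ => by rw [hiff w])]
    exact Finset.card_filter_add_card_filter_not _
  have hk1 : b₁₁ + b₁₂ = k₁ := by
    have := hsplit v₁; rw [(heq₁ v₁ hv₁).1, (heq₁ v₁ hv₁).2] at this; omega
  have hk2 : b₂₁ + b₂₂ = k₂ := by
    have := hsplit v₂; rw [(heq₂ v₂ hv₂).1, (heq₂ v₂ hv₂).2] at this; omega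
  -- the two classes
  set S₁ : Finset V := Finset.univ.filter (fun v => G.degree v = k₁) with hS₁
  set S₂ : Finset V := Finset.univ.filter (fun v => G.degree v = k₂) with hS₂
  set n₁ : ℕ := S₁.card
  set n₂ : ℕ := S₂.card
  have hn2 : 0 < n₂ := Finset.card_pos.mpr ⟨v₂, by simp [hS₂, hv₂]⟩
  -- double counting of edges between the classes
  have hcnt : n₁ * b₁₂ = n₂ * b₂₁ := by
    have e1 : n₁ * b₁₂ = ∑ v ∈ S₁, ((G.neighborFinset v).filter (fun w => G.degree w = k₂)).card := by
      rw [Finset.sum_congr rfl (fun v hv => (heq₁ v (by simpa [hS₁] using hv)).2)]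
      simp [mul_comm]
      exact Or.inl rfl
    have e2 : n₂ * b₂₁ = ∑ v ∈ S₂, ((G.neighborFinset v).filter (fun w => G.degree w = k₁)).card := by
      rw [Finset.sum_congr rfl (fun v hv => (heq₂ v (by simpa [hS₂] using hv)).1)]
      simp [mul_comm]
      exact Or.inl rfl
    rw [e1, e2]
    have e3 : ∀ (v : V) (k : ℕ), ((G.neighborFinset v).filter (fun w => G.degree w = k)).card
        = ∑ w : V, if G.Adj v w ∧ G.degree w = k then 1 else 0 := by
      intro v k
      rw [show (G.neighborFinset v).filter (fun w => G.degree w = k)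
          = Finset.univ.filter (fun w => G.Adj v w ∧ G.degree w = k) by
        ext w; simp]
      rw [Finset.card_filter]
    simp only [e3]
    have e4 : ∀ (p : Prop) [Decidable p] (f : V → ℕ),
        (if p then ∑ w : V, f w else 0) = ∑ w : V, if p then f w else 0 := by
      intro p _ f; split <;> simp
    rw [hS₁, hS₂, Finset.sum_filter, Finset.sum_filter]
    simp only [e4]
    rw [Finset.sum_comm]
    apply Finset.sum_congr rfl; intro v _
    apply Finset.sum_congr rfl; intro w _
    rcases hdeg v with h1 | h1 <;> rcases hdeg w with h2 | h2 <;>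
      by_cases h3 : G.Adj v w <;> simp [h1, h2, h3, G.adj_comm, hk, Ne.symm hk]
  -- the quotient-matrix eigenvalues
  set t : ℝ := (b₁₁ : ℝ) + b₂₂ with ht
  set D : ℝ := ((b₁₁ : ℝ) - b₂₂)^2 + 4 * b₁₂ * b₂₁ with hDdef
  have hD : 0 < D := by
    have : (1:ℝ) ≤ (b₁₂ : ℝ) := by exact_mod_cast hb12
    have : (1:ℝ) ≤ (b₂₁ : ℝ) := by exact_mod_cast hb21
    nlinarith [sq_nonneg ((b₁₁ : ℝ) - b₂₂), (show (1:ℝ) ≤ (b₁₂ : ℝ) from by exact_mod_cast hb12)]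
  set s : ℝ := Real.sqrt D with hsdef
  have hs : s ^ 2 = D := Real.sq_sqrt hD.le
  have hspos : 0 < s := Real.sqrt_pos.mpr hD
  set μp : ℝ := (t + s) / 2 with hμp
  set μm : ℝ := (t - s) / 2 with hμm
  have hμne : μp ≠ μm := by
    rw [hμp, hμm]; intro h; nlinarith
  have hfact : ∀ μ : ℝ, μ^2 - t*μ + ((b₁₁ : ℝ)*b₂₂ - b₁₂*b₂₁) = (μ - μp) * (μ - μm) := by
    intro μ
    rw [hμp, hμm, ht]
    have : s ^ 2 = ((b₁₁ : ℝ) - b₂₂)^2 + 4 * b₁₂ * b₂₁ := by rw [hs, hDdef]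
    linear_combination (1/4 : ℝ) * this
  have hrootp : μp^2 - t*μp + ((b₁₁ : ℝ)*b₂₂ - b₁₂*b₂₁) = 0 := by rw [hfact]; ring
  have hrootm : μm^2 - t*μm + ((b₁₁ : ℝ)*b₂₂ - b₁₂*b₂₁) = 0 := by rw [hfact]; ring
  -- the lifted eigenvectors
  set x : ℝ → V → ℝ := fun μ v => if G.degree v = k₁ then (b₁₂ : ℝ) else μ - b₁₁ with hx
  have heig : ∀ μ : ℝ, μ^2 - t*μ + ((b₁₁ : ℝ)*b₂₂ - b₁₂*b₂₁) = 0 →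
      (G.adjMatrix ℝ).mulVec (x μ) = μ • (x μ) := by
    intro μ hq
    funext v
    rw [SimpleGraph.adjMatrix_mulVec_apply]
    have hsum : ∑ w ∈ G.neighborFinset v, x μ w
        = ((G.neighborFinset v).filter (fun w => G.degree w = k₁)).card * (b₁₂ : ℝ)
          + ((G.neighborFinset v).filter (fun w => G.degree w = k₂)).card * (μ - b₁₁) := by
      rw [← Finset.sum_filter_add_sum_filter_not (G.neighborFinset v) (fun w => G.degree w = k₁)]
      congr 1
      · rw [Finset.sum_congr rfl (fun w hw => by
          simp only [hx]; rw [if_pos (Finset.mem_filter.mp hw).2])]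
        simp [mul_comm]
      · rw [show ((G.neighborFinset v).filter (fun w => ¬ G.degree w = k₁))
            = ((G.neighborFinset v).filter (fun w => G.degree w = k₂)) from
          Finset.filter_congr (fun w _ => by rw [hiff w])]
        rw [Finset.sum_congr rfl (fun w hw => by
          simp only [hx]; rw [if_neg ((hiff w).mpr (Finset.mem_filter.mp hw).2 |> fun h => by
            rcases hdeg w with h' | h' <;> simp_all)])]
        simp [mul_comm]
        ring
    rw [hsum]
    rcases hdeg v with hv | hv
    · rw [(heq₁ v hv).1, (heq₁ v hv).2]
      simp only [Pi.smul_apply, hx, if_pos hv, smul_eq_mul]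
      ring
    · rw [(heq₂ v hv).1, (heq₂ v hv).2]
      have hvne : ¬ G.degree v = k₁ := (hiff v).mpr hv
      simp only [Pi.smul_apply, hx, if_neg hvne, smul_eq_mul]
      linear_combination -hq
  -- dot products with the all-ones vector
  have hdot : ∀ μ : ℝ, (x μ) ⬝ᵥ (fun _ => (1:ℝ)) = (n₁ : ℝ) * b₁₂ + (n₂ : ℝ) * (μ - b₁₁) := by
    intro μ
    simp only [dotProduct, mul_one]
    rw [← Finset.sum_filter_add_sum_filter_not Finset.univ (fun v => G.degree v = k₁)]
    congr 1
    · rw [Finset.sum_congr rfl (fun v hv => by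
        simp only [hx]; rw [if_pos (Finset.mem_filter.mp hv).2])]
      simp [hS₁, mul_comm]
      exact Or.inl rfl
    · rw [Finset.sum_congr rfl (fun v hv => by
        simp only [hx]; rw [if_neg (Finset.mem_filter.mp hv).2])]
      rw [show (Finset.univ.filter (fun v => ¬ G.degree v = k₁)) = S₂ from
        Finset.filter_congr (fun w _ => by rw [hiff w])]
      simp [mul_comm]
      rw [show n₂ = S₂.card from rfl]; ring
  have hdotne : ∀ μ : ℝ, μ^2 - t*μ + ((b₁₁ : ℝ)*b₂₂ - b₁₂*b₂₁) = 0 →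
      (x μ) ⬝ᵥ (fun _ => (1:ℝ)) ≠ 0 := by
    intro μ hq h0
    rw [hdot] at h0
    -- then μ = b₁₁ - b₂₁
    have hcntR : (n₁ : ℝ) * b₁₂ = (n₂ : ℝ) * b₂₁ := by exact_mod_cast hcnt
    have hn2R : (0:ℝ) < n₂ := by exact_mod_cast hn2
    have hμval : μ = (b₁₁ : ℝ) - b₂₁ := by
      have : (n₂ : ℝ) * (μ - ((b₁₁ : ℝ) - b₂₁)) = 0 := by linarith [hcntR]
      rcases mul_eq_zero.mp this with h | h
      · exact absurd h (ne_of_gt hn2R)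
      · linarith
    rw [hμval, ht] at hq
    have hb21R : (0:ℝ) < b₂₁ := by exact_mod_cast hb21
    have hkk : ((b₂₁ : ℝ) + b₂₂) ≠ ((b₁₁ : ℝ) + b₁₂) := by
      intro h
      apply hk
      have : b₁₁ + b₁₂ = b₂₁ + b₂₂ := by exact_mod_cast h.symm
      omega
    have : (b₂₁ : ℝ) * ((b₂₁ : ℝ) + b₂₂ - b₁₁ - b₁₂) = 0 := by linear_combination hq
    rcases mul_eq_zero.mp this with h | h
    · exact absurd h (ne_of_gt hb21R)
    · exact hkk (by linarith)
  have hxne : ∀ μ : ℝ, x μ ≠ 0 := by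
    intro μ hc
    have := congrFun hc v₁
    simp only [hx, if_pos hv₁, Pi.zero_apply] at this
    have : b₁₂ = 0 := by exact_mod_cast this
    omega
  -- the two main eigenvalues exist
  have hmainp : G.IsMainEigenvalue μp := ⟨x μp, hxne μp, heig μp hrootp, hdotne μp hrootp⟩
  have hmainm : G.IsMainEigenvalue μm := ⟨x μm, hxne μm, heig μm hrootm, hdotne μm hrootm⟩
  -- conversely, any main eigenvalue is μp or μm
  have hconv : ∀ μ : ℝ, G.IsMainEigenvalue μ → μ = μp ∨ μ = μm := by
    intro μ ⟨z, hz0, hzA, hz1⟩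
    by_contra hcon
    push_neg at hcon
    obtain ⟨hnep, hnem⟩ := hcon
    have horth : ∀ ν : ℝ, ∀ y : V → ℝ, (G.adjMatrix ℝ).mulVec y = ν • y → μ ≠ ν →
        z ⬝ᵥ y = 0 := by
      intro ν y hy hne
      have key : μ * (z ⬝ᵥ y) = ν * (z ⬝ᵥ y) := by
        have e1 : ((G.adjMatrix ℝ).mulVec z) ⬝ᵥ y = z ⬝ᵥ ((G.adjMatrix ℝ).mulVec y) := by
          rw [dotProduct_mulVec z _ y]
          congr 1
          rw [← Matrix.mulVec_transpose, SimpleGraph.transpose_adjMatrix]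
        rw [hzA, hy] at e1
        simpa [smul_dotProduct, dotProduct_smul, smul_eq_mul] using e1
      have : (μ - ν) * (z ⬝ᵥ y) = 0 := by linarith
      rcases mul_eq_zero.mp this with h | h
      · exact absurd (by linarith : μ = ν) hne
      · exact h
    have hzp : z ⬝ᵥ x μp = 0 := horth μp (x μp) (heig μp hrootp) hnep
    have hzm : z ⬝ᵥ x μm = 0 := horth μm (x μm) (heig μm hrootm) hnem
    -- the all-ones vector is a combination of x μp and x μm
    have hb12R : (0:ℝ) < b₁₂ := by exact_mod_cast hb12
    set α : ℝ := ((b₁₂ : ℝ) + b₁₁ - μm) / (b₁₂ * s) with hα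
    set β : ℝ := (μp - (b₁₁ : ℝ) - b₁₂) / (b₁₂ * s) with hβ
    have hones : (fun _ : V => (1:ℝ)) = α • (x μp) + β • (x μm) := by
      funext v
      simp only [Pi.add_apply, Pi.smul_apply, smul_eq_mul, hx]
      have hden : (b₁₂ : ℝ) * s ≠ 0 := by positivity
      by_cases hv : G.degree v = k₁
      · rw [if_pos hv, if_pos hv, hα, hβ]
        field_simp
        rw [hμp, hμm]
        ring
      · rw [if_neg hv, if_neg hv, hα, hβ]
        field_simp
        rw [hμp, hμm]
        ring

    apply hz1
    calc z ⬝ᵥ (fun _ => (1:ℝ)) = z ⬝ᵥ (α • (x μp) + β • (x μm)) := by rw [← hones]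
    _ = α * (z ⬝ᵥ x μp) + β * (z ⬝ᵥ x μm) := by
        rw [dotProduct_add, dotProduct_smul, dotProduct_smul]; simp [smul_eq_mul]
    _ = 0 := by rw [hzp, hzm]; ring
  have hset : {μ : ℝ | G.IsMainEigenvalue μ} = {μp, μm} := by
    ext μ
    constructor
    · intro h; exact hconv μ h
    · intro h
      rcases h with h | h
      · rw [h]; exact hmainp
      · rw [Set.mem_singleton_iff.mp h]; exact hmainm
  rw [hset]
  exact Set.ncard_pair hμne
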